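/- Let n, p ∈ ℕ, i ∈ {0,...,n} with i + p ≤ n, and I = ⟨i,i+p⟩ = {i,...,i+p}. For every x_0 ∈ res(⊛γ^u_n(I)) it holds that ũ_n(0, x_0) ∈ γ^u_n(I), and for every x_1 ∈ res(⊛γ^ū_n(I)) it holds that ũ_n(1, x_1) ∈ γ^ū_n(I). -/

import Mathlib

/-- Resolution of a ternary word (`none` is the metastable value `M`). -/
def res {n : ℕ} (x : Fin n → Option Bool) : Set (Fin n → Bool) :=
  {y | ∀ j : Fin n, ∀ b : Bool, x j = some b → y j = b}

open Classical in
/-- Extended codeword: pointwise superposition of all codewords `γ a`, `a ∈ I`. -/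
noncomputable def extCW {M n : ℕ} (γ : Fin M → Fin n → Bool) (I : Set (Fin M)) :
    Fin n → Option Bool :=
  fun j =>
    if ∀ a ∈ I, γ a j = true then some true
    else if ∀ a ∈ I, γ a j = false then some false
    else none

/-- The interval `⟨i, i+p⟩ = {i, ..., i+p}` inside `{0, ..., M-1}`. -/
def intvl (M i p : ℕ) : Set (Fin M) := {a : Fin M | i ≤ a.val ∧ a.val ≤ i + p}

/-- Unary thermometer codeword `1^m 0^(k-m)`. -/
def unary (k m : ℕ) : Fin k → Bool := fun j => decide (j.val < m)

/-- Unary thermometer codeword `0^m 1^(k-m)`. -/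
def unaryBar (k m : ℕ) : Fin k → Bool := fun j => decide (m ≤ j.val)

/-- `ℓ_b^max`: maximal (1-indexed) position with bit `b`, `0` if none. -/
def lmaxIdx {k : ℕ} (b : Bool) (x : Fin k → Bool) : ℕ :=
  (Finset.univ.filter (fun i : Fin k => x i = b)).sup (fun i => i.val + 1)

/-- `ℓ_b^min`: minimal (1-indexed) position with bit `b`, `k+1` if none. -/
def lminIdx {k : ℕ} (b : Bool) (x : Fin k → Bool) : ℕ :=
  (((Finset.univ.filter (fun i : Fin k => x i = b)).image (fun i : Fin k => i.val + 1)) ∪ {k+1}).min'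
    (Finset.Nonempty.inr (Finset.singleton_nonempty _))

/-- The bit at (1-indexed) position `⌈k/2⌉`, i.e. zero-based index `(k-1)/2`. -/
def midBit {k : ℕ} (x : Fin k → Bool) : Bool :=
  if h : (k-1)/2 < k then x ⟨(k-1)/2, h⟩ else false

/-- The unary thermometer mapping `ũ_k`. -/
def uMap {k : ℕ} (π : Bool) (x : Fin k → Bool) : Fin k → Bool :=
  match π, midBit x with
  | false, false => unary k (lminIdx false x - 1)
  | false, true  => unary k (lmaxIdx true x)
  | true,  false => unaryBar k (lmaxIdx false x)
  | true,  true  => unaryBar k (lminIdx true x - 1)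


lemma le_lmax {k : ℕ} {b : Bool} {x : Fin k → Bool} {j : Fin k} (h : x j = b) :
    j.val + 1 ≤ lmaxIdx b x := by
  unfold lmaxIdx
  exact Finset.le_sup (f := fun i : Fin k => i.val + 1) (by simp [h])

lemma lmax_le {k : ℕ} {b : Bool} {x : Fin k → Bool} {c : ℕ}
    (h : ∀ j : Fin k, x j = b → j.val + 1 ≤ c) : lmaxIdx b x ≤ c := by
  unfold lmaxIdx
  exact Finset.sup_le (fun j hj => h j (by simpa using hj))

lemma lmin_le {k : ℕ} {b : Bool} {x : Fin k → Bool} {j : Fin k} (h : x j = b) :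
    lminIdx b x ≤ j.val + 1 := Finset.min'_le _ _ (by simp; exact Or.inr ⟨j, h, rfl⟩)

lemma lmin_le_succ {k : ℕ} {b : Bool} {x : Fin k → Bool} : lminIdx b x ≤ k + 1 :=
  Finset.min'_le _ _ (by simp)

lemma le_lmin {k : ℕ} {b : Bool} {x : Fin k → Bool} {c : ℕ}
    (h1 : ∀ j : Fin k, x j = b → c ≤ j.val + 1) (h2 : c ≤ k + 1) : c ≤ lminIdx b x := by
  apply Finset.le_min'
  intro y hy
  simp at hy
  rcases hy.symm with ⟨j, hj, rfl⟩ | rfl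
  · exact h1 j hj
  · exact h2

/-- Every resolution of the extended codeword of an interval of the unary
thermometer codes is mapped by `ũ_n` to a codeword of that interval. -/
theorem uMap_maps_into_interval (n i p : ℕ) (hip : i + p ≤ n) :
    (∀ x0 ∈ res (extCW (fun a : Fin (n+1) => unary n a.val) (intvl (n+1) i p)),
        uMap false x0 ∈ (fun a : Fin (n+1) => unary n a.val) '' intvl (n+1) i p) ∧
    (∀ x1 ∈ res (extCW (fun a : Fin (n+1) => unaryBar n a.val) (intvl (n+1) i p)),
        uMap true x1 ∈ (fun a : Fin (n+1) => unaryBar n a.val) '' intvl (n+1) i p) := by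
  constructor
  · intro x hx
    have hlt : ∀ j : Fin n, j.val < i → x j = true := by
      intro j hj
      apply hx j true
      unfold extCW
      rw [if_pos]
      intro a ha
      simp only [unary, decide_eq_true_eq]
      have := ha.1
      omega
    have hge : ∀ j : Fin n, i + p ≤ j.val → x j = false := by
      intro j hj
      apply hx j false
      unfold extCW
      rw [if_neg, if_pos]
      · intro a ha
        simp only [unary, decide_eq_false_iff_not]
        have := ha.2
        omega
      · intro h
        have := h ⟨i, by omega⟩ ⟨le_refl _, Nat.le_add_right i p⟩
        simp [unary] at this
        omega
    cases hmid : midBit x with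
    | false =>
      have h1 : i + 1 ≤ lminIdx false x := by
        apply le_lmin
        · intro j hj
          by_contra hc
          rw [hlt j (by omega)] at hj
          exact Bool.true_eq_false.mp hj
        · omega
      have h2 : lminIdx false x ≤ i + p + 1 := by
        by_cases hp : i + p < n
        · exact lmin_le (hge ⟨i + p, hp⟩ (le_refl _))
        · have := lmin_le_succ (b := false) (x := x)
          omega
      refine ⟨⟨lminIdx false x - 1, by omega⟩, ⟨by simp; omega, by simp; omega⟩, ?_⟩
      simp only [uMap, hmid]
    | true =>
      have h1 : i ≤ lmaxIdx true x := by
        rcases Nat.eq_zero_or_pos i with h0 | h0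
        · omega
        · have := le_lmax (hlt ⟨i - 1, by omega⟩ (by simp; omega))
          simp at this
          omega
      have h2 : lmaxIdx true x ≤ i + p := by
        apply lmax_le
        intro j hj
        by_contra hc
        rw [hge j (by omega)] at hj
        exact Bool.false_eq_true.mp hj
      refine ⟨⟨lmaxIdx true x, by omega⟩, ⟨by simp; omega, by simp; omega⟩, ?_⟩
      simp only [uMap, hmid]
  · intro x hx
    have hlt : ∀ j : Fin n, j.val < i → x j = false := by
      intro j hj
      apply hx j false
      unfold extCW
      rw [if_neg, if_pos]
      · intro a ha
        simp only [unaryBar, decide_eq_false_iff_not]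
        have := ha.1
        omega
      · intro h
        have := h ⟨i, by omega⟩ ⟨le_refl _, Nat.le_add_right i p⟩
        simp [unaryBar] at this
        omega
    have hge : ∀ j : Fin n, i + p ≤ j.val → x j = true := by
      intro j hj
      apply hx j true
      unfold extCW
      rw [if_pos]
      intro a ha
      simp only [unaryBar, decide_eq_true_eq]
      have := ha.2
      omega
    cases hmid : midBit x with
    | false =>
      have h1 : i ≤ lmaxIdx false x := by
        rcases Nat.eq_zero_or_pos i with h0 | h0
        · omega
        · have := le_lmax (hlt ⟨i - 1, by omega⟩ (by simp; omega))
          simp at this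
          omega
      have h2 : lmaxIdx false x ≤ i + p := by
        apply lmax_le
        intro j hj
        by_contra hc
        rw [hge j (by omega)] at hj
        exact Bool.true_eq_false.mp hj
      refine ⟨⟨lmaxIdx false x, by omega⟩, ⟨by simp; omega, by simp; omega⟩, ?_⟩
      simp only [uMap, hmid]
    | true =>
      have h1 : i + 1 ≤ lminIdx true x := by
        apply le_lmin
        · intro j hj
          by_contra hc
          rw [hlt j (by omega)] at hj
          exact Bool.false_eq_true.mp hj
        · omega
      have h2 : lminIdx true x ≤ i + p + 1 := by
        by_cases hp : i + p < n
        · exact lmin_le (hge ⟨i + p, hp⟩ (le_refl _))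
        · have := lmin_le_succ (b := true) (x := x)
          omega
      refine ⟨⟨lminIdx true x - 1, by omega⟩, ⟨by simp; omega, by simp; omega⟩, ?_⟩
      simp only [uMap, hmid]
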